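/- Let f : D → F be a function between finite sets. Let y be uniformly distributed on F, let x_u be uniformly distributed on D, and let x be sampled by: given y, if f⁻¹(y) is nonempty pick x uniformly in f⁻¹(y), otherwise set x = ⊥ (a symbol not in D). Then the statistical distance between x and x_u equals the statistical distance between y and f(x_u). -/

import Mathlib

/-- Let `f : D → F` be a function between finite sets. Let `y` be uniform
on `F`, `x_u` uniform on `D`, and let `x` be sampled by: draw `y` uniformly, and if
`f⁻¹(y)` is nonempty pick `x` uniformly in it, else output `⊥` (modeled by `none`).
Then `Δ(x, x_u) = Δ(y, f(x_u))`. -/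
theorem stmt_0 {D F : Type*} [Fintype D] [Fintype F] [DecidableEq F]
    [Nonempty D] [Nonempty F] (f : D → F)
    (px pxu : Option D → ℝ) (py pfxu : F → ℝ)
    (hpx_none : px none =
      ((Fintype.card F - (Finset.univ.image f).card : ℕ) : ℝ) / Fintype.card F)
    (hpx_some : ∀ d : D, px (some d) =
      (1 / (Fintype.card F : ℝ)) *
        (1 / ((Finset.univ.filter (fun d' : D => f d' = f d)).card : ℝ)))
    (hpxu_none : pxu none = 0)
    (hpxu_some : ∀ d : D, pxu (some d) = 1 / (Fintype.card D : ℝ))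
    (hpy : ∀ a : F, py a = 1 / (Fintype.card F : ℝ))
    (hpfxu : ∀ a : F, pfxu a =
      ((Finset.univ.filter (fun d : D => f d = a)).card : ℝ) / Fintype.card D) :
    (1 / 2) * ∑ o : Option D, |px o - pxu o|
      = (1 / 2) * ∑ a : F, |py a - pfxu a| := by
  classical
  congr 1
  set im := Finset.univ.image f with him
  have hFpos : (0:ℝ) < Fintype.card F := by
    exact_mod_cast Fintype.card_pos
  rw [← Finset.sum_add_sum_compl im (fun a => |py a - pfxu a|)]
  rw [Fintype.sum_option]
  have hsum : ∑ a ∈ im, |py a - pfxu a| = ∑ d : D, |px (some d) - pxu (some d)| := by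
    apply Finset.sum_image'
    intro d _
    set n := (Finset.univ.filter (fun d' : D => f d' = f d)).card with hn
    have hnpos : 0 < n := Finset.card_pos.mpr ⟨d, by simp⟩
    have hnR : (0:ℝ) < (n:ℝ) := by exact_mod_cast hnpos
    have hDpos : (0:ℝ) < Fintype.card D := by exact_mod_cast Fintype.card_pos
    have hstep : ∑ j ∈ Finset.univ.filter (fun d' : D => f d' = f d),
        |px (some j) - pxu (some j)|
        = (n:ℝ) * |(1 / (Fintype.card F : ℝ)) * (1 / (n:ℝ)) - 1 / (Fintype.card D : ℝ)| := by
      rw [Finset.sum_congr rfl (fun j hj => ?_), Finset.sum_const, nsmul_eq_mul]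
      rw [hpx_some, hpxu_some]
      have hj' : f j = f d := (Finset.mem_filter.mp hj).2
      rw [show (Finset.univ.filter (fun d' : D => f d' = f j))
            = Finset.univ.filter (fun d' : D => f d' = f d) by simp [hj']]
    rw [hstep, hpy, hpfxu, ← abs_of_pos hnR, ← abs_mul]
    congr 1
    field_simp
    rw [abs_of_pos hnR]
    ring
  have hcard : imᶜ.card = Fintype.card F - im.card := Finset.card_compl im
  rw [hpxu_none, hpx_none, sub_zero]
  have hle : im.card ≤ Fintype.card F := by simpa using Finset.card_le_univ im
  have hc : ∑ a ∈ imᶜ, |py a - pfxu a| = imᶜ.card * (1 / (Fintype.card F : ℝ)) := by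
    rw [Finset.sum_congr rfl (fun a ha => ?_), Finset.sum_const, nsmul_eq_mul]
    have hfib : (Finset.univ.filter (fun d : D => f d = a)).card = 0 := by
      rw [Finset.card_eq_zero, Finset.filter_eq_empty_iff]
      intro d _ hd
      exact (Finset.mem_compl.mp ha) (Finset.mem_image.mpr ⟨d, Finset.mem_univ d, hd⟩)
    rw [hpy, hpfxu, hfib]
    rw [Nat.cast_zero, zero_div, sub_zero, abs_of_pos (by positivity)]
  rw [hsum, hc, hcard, abs_of_nonneg (by positivity)]
  ring
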